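/- Let G = (V, E) be a connected finite simple graph, let a, b ∈ V be two distinct vertices, let v ∉ V be a new vertex, and let G' = (V ∪ {v}, E ∪ {{a,v}, {v,b}}) be the graph obtained by adding v together with the two edges {a,v} and {v,b}. Then α(G') ≥ 3·α(G). -/

import Mathlib

open SimpleGraph

/-- The number of edge covers of a finite simple graph: subsets `E'` of the edge set
such that every vertex is incident to at least one edge of `E'`. -/
noncomputable def edgeCoverCount {V : Type*} (G : SimpleGraph V) : ℕ :=
  {E' : Set (Sym2 V) | E' ⊆ G.edgeSet ∧ ∀ v : V, ∃ e ∈ E', v ∈ e}.ncard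

lemma none_not_mem_map_some {V : Type*} (e : Sym2 V) :
    (none : Option V) ∉ Sym2.map (some : V → Option V) e := by
  rw [Sym2.mem_map]
  rintro ⟨x, -, hx⟩
  exact Option.some_ne_none x hx

lemma union_inj_aux {V : Type*} (X : Set (Sym2 (Option V)))
    (hX : ∀ e ∈ X, (none : Option V) ∈ e) :
    Function.Injective (fun E' : Set (Sym2 V) =>
      Sym2.map (some : V → Option V) '' E' ∪ X) := by
  intro E1 E2 h
  have himg : ∀ E : Set (Sym2 V),
      (Sym2.map (some : V → Option V) '' E ∪ X) ∩ {e | (none : Option V) ∉ e}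
        = Sym2.map (some : V → Option V) '' E := by
    intro E
    ext e
    constructor
    · rintro ⟨he | he, hn⟩
      · exact he
      · exact absurd (hX e he) hn
    · intro he
      refine ⟨Or.inl he, ?_⟩
      obtain ⟨f, -, rfl⟩ := he
      exact none_not_mem_map_some f
  have h2 : Sym2.map (some : V → Option V) '' E1 = Sym2.map (some : V → Option V) '' E2 := by
    rw [← himg E1, ← himg E2]
    simp only at h
    rw [h]
  exact Set.image_injective.mpr (Sym2.map.injective (Option.some_injective V)) h2

lemma cover_mem_aux {V : Type*} (G : SimpleGraph V) (a b : V)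
    (X : Set (Sym2 (Option V)))
    (hX : X ⊆ ({s((some a : Option V), (none : Option V)),
        s((none : Option V), (some b : Option V))} : Set (Sym2 (Option V))))
    (hXne : X.Nonempty)
    (E' : Set (Sym2 V)) (hE1 : E' ⊆ G.edgeSet) (hE2 : ∀ v : V, ∃ e ∈ E', v ∈ e) :
    (Sym2.map (some : V → Option V) '' E' ∪ X) ⊆
      (SimpleGraph.fromEdgeSet
        ((Sym2.map (some : V → Option V)) '' G.edgeSet ∪
          {s((some a : Option V), (none : Option V)),
            s((none : Option V), (some b : Option V))})).edgeSet ∧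
    ∀ v : Option V, ∃ e ∈ Sym2.map (some : V → Option V) '' E' ∪ X, v ∈ e := by
  constructor
  · rintro e (⟨f, hf, rfl⟩ | he)
    · rw [SimpleGraph.edgeSet_fromEdgeSet]
      refine ⟨Or.inl ⟨f, hE1 hf, rfl⟩, ?_⟩
      simp only [Set.mem_setOf_eq, Sym2.mem_diagSet, Sym2.isDiag_map (Option.some_injective V)]
      exact G.not_isDiag_of_mem_edgeSet (hE1 hf)
    · rw [SimpleGraph.edgeSet_fromEdgeSet]
      refine ⟨Or.inr (hX he), ?_⟩
      rcases hX he with h | h <;> subst h <;>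
        simp [Sym2.mk_isDiag_iff]
  · intro v
    match v with
    | none =>
      obtain ⟨e, he⟩ := hXne
      refine ⟨e, Or.inr he, ?_⟩
      rcases hX he with h | h <;> subst h <;> simp
    | some x =>
      obtain ⟨e, he, hx⟩ := hE2 x
      exact ⟨Sym2.map some e, Or.inl ⟨e, he, rfl⟩, Sym2.mem_map.mpr ⟨x, hx, rfl⟩⟩

/-- Adding a new vertex (`none` in `Option V`) joined to two distinct existing vertices
`a` and `b` of a connected finite simple graph at least triples the number of edge covers. -/
theorem edgeCoverCount_add_vertex {V : Type*} [Fintype V] (G : SimpleGraph V)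
    (hG : G.Connected) (a b : V) (hab : a ≠ b) :
    3 * edgeCoverCount G ≤
      edgeCoverCount (SimpleGraph.fromEdgeSet
        ((Sym2.map (some : V → Option V)) '' G.edgeSet ∪
          {s((some a : Option V), (none : Option V)), s((none : Option V), (some b : Option V))})) := by
  classical
  set e1 : Sym2 (Option V) := s((some a : Option V), (none : Option V)) with he1
  set e2 : Sym2 (Option V) := s((none : Option V), (some b : Option V)) with he2
  have he12 : e1 ≠ e2 := by
    rw [he1, he2]
    intro h
    rw [Sym2.eq_iff] at h
    rcases h with ⟨h, -⟩ | ⟨h, -⟩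
    · simp at h
    · exact hab (Option.some_injective V h)
  set G' := SimpleGraph.fromEdgeSet
      ((Sym2.map (some : V → Option V)) '' G.edgeSet ∪ {e1, e2}) with hG'def
  set A : Set (Set (Sym2 V)) := {E' | E' ⊆ G.edgeSet ∧ ∀ v : V, ∃ e ∈ E', v ∈ e} with hA
  set B : Set (Set (Sym2 (Option V))) :=
    {E' | E' ⊆ G'.edgeSet ∧ ∀ v : Option V, ∃ e ∈ E', v ∈ e} with hB
  -- the three injections
  set f0 : Set (Sym2 V) → Set (Sym2 (Option V)) :=
    fun E' => Sym2.map (some : V → Option V) '' E' ∪ {e1} with hf0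
  set f1 : Set (Sym2 V) → Set (Sym2 (Option V)) :=
    fun E' => Sym2.map (some : V → Option V) '' E' ∪ {e2} with hf1
  set f2 : Set (Sym2 V) → Set (Sym2 (Option V)) :=
    fun E' => Sym2.map (some : V → Option V) '' E' ∪ {e1, e2} with hf2
  have hne1 : (none : Option V) ∈ e1 := by rw [he1]; simp
  have hne2 : (none : Option V) ∈ e2 := by rw [he2]; simp
  have hinj0 : Function.Injective f0 := by
    apply union_inj_aux; rintro e rfl; exact hne1
  have hinj1 : Function.Injective f1 := by
    apply union_inj_aux; rintro e rfl; exact hne2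
  have hinj2 : Function.Injective f2 := by
    apply union_inj_aux; rintro e (rfl | rfl); exacts [hne1, hne2]
  have hmaps : ∀ E' ∈ A, f0 E' ∈ B ∧ f1 E' ∈ B ∧ f2 E' ∈ B := by
    rintro E' ⟨h1, h2⟩
    refine ⟨cover_mem_aux G a b {e1} ?_ ⟨e1, rfl⟩ E' h1 h2,
      cover_mem_aux G a b {e2} ?_ ⟨e2, rfl⟩ E' h1 h2,
      cover_mem_aux G a b {e1, e2} ?_ ⟨e1, Or.inl rfl⟩ E' h1 h2⟩
    · rintro e rfl; exact Or.inl rfl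
    · rintro e rfl; exact Or.inr rfl
    · exact fun e he => he
  -- membership of extra edges distinguishes the three families
  have hmem0 : ∀ E', e1 ∈ f0 E' ∧ e2 ∉ f0 E' := by
    intro E'
    refine ⟨Or.inr rfl, ?_⟩
    rintro (⟨f, -, hf⟩ | h)
    · exact none_not_mem_map_some f (hf ▸ hne2)
    · exact he12 h.symm
  have hmem1 : ∀ E', e1 ∉ f1 E' := by
    intro E'
    rintro (⟨f, -, hf⟩ | h)
    · exact none_not_mem_map_some f (hf ▸ hne1)
    · exact he12 h
  have hmem2 : ∀ E', e1 ∈ f2 E' ∧ e2 ∈ f2 E' := by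
    intro E'
    exact ⟨Or.inr (Or.inl rfl), Or.inr (Or.inr rfl)⟩
  have hdisj01 : Disjoint (f0 '' A) (f1 '' A) := by
    rw [Set.disjoint_left]
    rintro s ⟨E', -, rfl⟩ ⟨F', -, hF⟩
    exact hmem1 F' (hF ▸ (hmem0 E').1)
  have hdisj02 : Disjoint (f0 '' A) (f2 '' A) := by
    rw [Set.disjoint_left]
    rintro s ⟨E', -, rfl⟩ ⟨F', -, hF⟩
    exact (hmem0 E').2 (hF ▸ (hmem2 F').2)
  have hdisj12 : Disjoint (f1 '' A) (f2 '' A) := by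
    rw [Set.disjoint_left]
    rintro s ⟨E', -, rfl⟩ ⟨F', -, hF⟩
    exact hmem1 E' (hF ▸ (hmem2 F').1)
  have hsub : f0 '' A ∪ f1 '' A ∪ f2 '' A ⊆ B := by
    rintro s ((⟨E', hE', rfl⟩ | ⟨E', hE', rfl⟩) | ⟨E', hE', rfl⟩)
    · exact (hmaps E' hE').1
    · exact (hmaps E' hE').2.1
    · exact (hmaps E' hE').2.2
  have hcard0 : (f0 '' A).ncard = A.ncard := Set.ncard_image_of_injective A hinj0
  have hcard1 : (f1 '' A).ncard = A.ncard := Set.ncard_image_of_injective A hinj1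
  have hcard2 : (f2 '' A).ncard = A.ncard := Set.ncard_image_of_injective A hinj2
  have hBfin : B.Finite := Set.toFinite B
  have hunion : (f0 '' A ∪ f1 '' A ∪ f2 '' A).ncard = 3 * A.ncard := by
    rw [Set.ncard_union_eq (by exact Set.disjoint_union_left.mpr ⟨hdisj02, hdisj12⟩)
        ((Set.toFinite _)) (Set.toFinite _),
      Set.ncard_union_eq hdisj01 (Set.toFinite _) (Set.toFinite _),
      hcard0, hcard1, hcard2]
    ring
  have : edgeCoverCount G = A.ncard := rfl
  have hB' : edgeCoverCount G' = B.ncard := rfl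
  rw [this, hB', ← hunion]
  exact Set.ncard_le_ncard hsub hBfin
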